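/- arXiv:1201.3212 — 3 statements merged into one kernel-verified Lean document; each statement's English description precedes it below -/
import Mathlib

section
/- Let K₁ ⊆ ℝ^{n₁} and K₂ ⊆ ℝ^{n₂} be proper cones (closed, convex, with nonempty interior, containing no line). If x₁ is in the interior of K₁ and x₂ is in the interior of K₂, then the Kronecker product x₁ ⊗ x₂ lies in the interior of the cone K₁ ⊗ K₂ := conv{y₁ ⊗ y₂ : y₁ ∈ K₁, y₂ ∈ K₂}. -/
noncomputable section

/-- A proper cone: closed, convex, closed under nonnegative scaling, with nonempty
interior, containing no straight line (salient). -/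
def IsProperCone {E : Type*} [NormedAddCommGroup E] [NormedSpace ℝ E] (K : Set E) : Prop :=
  IsClosed K ∧ Convex ℝ K ∧ (∀ c : ℝ, 0 ≤ c → ∀ x ∈ K, c • x ∈ K) ∧
    (interior K).Nonempty ∧ ∀ x ∈ K, x ≠ 0 → -x ∉ K

/-- The Kronecker (tensor) product of two vectors. -/
def tensorVec {n₁ n₂ : ℕ} (x : Fin n₁ → ℝ) (y : Fin n₂ → ℝ) : Fin n₁ × Fin n₂ → ℝ :=
  fun p => x p.1 * y p.2

/-- The tensor product cone `K₁ ⊗ K₂`: the closed convex (conic) hull of the set of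
Kronecker products of elements of `K₁` and `K₂`. -/
def tensorCone {n₁ n₂ : ℕ} (K₁ : Set (Fin n₁ → ℝ)) (K₂ : Set (Fin n₂ → ℝ)) :
    Set (Fin n₁ × Fin n₂ → ℝ) :=
  closure (convexHull ℝ {z | ∃ x ∈ K₁, ∃ y ∈ K₂, z = tensorVec x y})

/-- Auxiliary: expressing `q - p` as a sum of scaled coordinate vectors. -/
lemma sum_coord_single {ι : Type*} [Fintype ι] [DecidableEq ι] (q p : ι → ℝ) :
    ∑ k, (q k - p k) • (Pi.single k 1 : ι → ℝ) = q - p := by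
  funext j
  simp [Finset.sum_apply, Pi.single_apply]

/-- Auxiliary: if a convex set contains `p` and the whole "cross polytope"
vertices `p ± δ eₖ` for every coordinate direction, then `p` is interior. -/
lemma mem_interior_of_cross {ι : Type*} [Fintype ι] [DecidableEq ι]
    {C : Set (ι → ℝ)} (hC : Convex ℝ C) {p : ι → ℝ} {δ : ℝ} (hδ : 0 < δ)
    (hp : p ∈ C)
    (hplus : ∀ k, p + δ • (Pi.single k 1 : ι → ℝ) ∈ C)
    (hminus : ∀ k, p - δ • (Pi.single k 1 : ι → ℝ) ∈ C) :
    p ∈ interior C := by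
  cases isEmpty_or_nonempty ι with
  | inl h =>
    have hC' : C = Set.univ := Set.eq_univ_of_forall fun x => by
      have hx : x = p := Subsingleton.elim x p
      rwa [hx]
    simp [hC']
  | inr h =>
    have hcard : 0 < Fintype.card ι := Fintype.card_pos
    set N : ℝ := (Fintype.card ι : ℝ) with hNdef
    have hN : 0 < N := by rw [hNdef]; exact_mod_cast hcard
    have hseg : ∀ (k : ι) (s : ℝ), |s| ≤ δ → p + s • (Pi.single k 1 : ι → ℝ) ∈ C := by
      intro k s hs
      set e : ι → ℝ := Pi.single k 1
      have hs1 : -δ ≤ s := neg_le_of_abs_le hs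
      have hs2 : s ≤ δ := le_of_abs_le hs
      have ha : (0:ℝ) ≤ (δ + s) / (2 * δ) := by
        apply div_nonneg (by linarith) (by linarith)
      have hb : (0:ℝ) ≤ (δ - s) / (2 * δ) := by
        apply div_nonneg (by linarith) (by linarith)
      have hab : (δ + s) / (2 * δ) + (δ - s) / (2 * δ) = 1 := by
        field_simp
        ring
      have hmem := hC (hplus k) (hminus k) ha hb hab
      have key : ((δ + s) / (2 * δ)) • (p + δ • e) + ((δ - s) / (2 * δ)) • (p - δ • e)
          = (((δ + s) / (2 * δ)) + ((δ - s) / (2 * δ))) • p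
            + ((((δ + s) / (2 * δ)) - ((δ - s) / (2 * δ))) * δ) • e := by
        module
      have hco : (((δ + s) / (2 * δ)) - ((δ - s) / (2 * δ))) * δ = s := by
        field_simp
        ring
      rw [key, hab, one_smul, hco] at hmem
      exact hmem
    have hball : Metric.ball p (δ / N) ⊆ C := by
      intro q hq
      have hq' : ∀ k, |q k - p k| ≤ δ / N := by
        intro k
        have h1 := dist_le_pi_dist q p k
        rw [Real.dist_eq] at h1
        exact h1.trans (le_of_lt (Metric.mem_ball.mp hq))
      set y : ι → (ι → ℝ) := fun k => p + (N * (q k - p k)) • (Pi.single k 1 : ι → ℝ)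
        with hydef
      have hy : ∀ k, y k ∈ C := by
        intro k
        apply hseg
        rw [abs_mul, abs_of_pos hN]
        calc N * |q k - p k| ≤ N * (δ / N) := by
              exact mul_le_mul_of_nonneg_left (hq' k) hN.le
          _ = δ := by field_simp
      have hqeq : ∑ k, N⁻¹ • y k = q := by
        simp only [hydef, smul_add, Finset.sum_add_distrib, smul_smul,
          Finset.sum_const, Finset.card_univ]
        have h2 : ∀ k, (N⁻¹ * (N * (q k - p k))) • (Pi.single k 1 : ι → ℝ)
            = (q k - p k) • (Pi.single k 1 : ι → ℝ) := by
          intro k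
          rw [inv_mul_cancel_left₀ hN.ne']
        rw [Finset.sum_congr rfl (fun k _ => h2 k), sum_coord_single]
        have h3 : (Fintype.card ι) • (N⁻¹ • p) = p := by
          rw [← Nat.cast_smul_eq_nsmul ℝ, ← hNdef, smul_smul, mul_inv_cancel₀ hN.ne', one_smul]
        rw [h3, add_sub_cancel]
      have hsum : ∑ k : ι, (N⁻¹ : ℝ) = 1 := by
        rw [Finset.sum_const, Finset.card_univ, nsmul_eq_mul, ← hNdef,
          mul_inv_cancel₀ hN.ne']
      have := hC.sum_mem (fun k _ => by positivity) hsum (fun k _ => hy k)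
      rw [hqeq] at this
      exact this
    exact mem_interior.mpr ⟨Metric.ball p (δ / N), hball, Metric.isOpen_ball,
      Metric.mem_ball_self (by positivity)⟩

/-- Auxiliary: coordinate vectors of the product space factor as Kronecker products. -/
lemma single_prod_eq {n₁ n₂ : ℕ} (i : Fin n₁) (j : Fin n₂) (z : Fin n₁ × Fin n₂) :
    (Pi.single (i, j) 1 : Fin n₁ × Fin n₂ → ℝ) z
      = (Pi.single i 1 : Fin n₁ → ℝ) z.1 * (Pi.single j 1 : Fin n₂ → ℝ) z.2 := by
  obtain ⟨a, b⟩ := z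
  simp only [Pi.single_apply, Prod.mk.injEq]
  by_cases h1 : a = i <;> by_cases h2 : b = j <;> simp [h1, h2]

lemma midpoint_plus {n₁ n₂ : ℕ} (x₁ : Fin n₁ → ℝ) (x₂ : Fin n₂ → ℝ)
    (i : Fin n₁) (j : Fin n₂) (t : ℝ) :
    (1/2 : ℝ) • tensorVec (x₁ + t • (Pi.single i 1 : Fin n₁ → ℝ))
        (x₂ + t • (Pi.single j 1 : Fin n₂ → ℝ))
      + (1/2 : ℝ) • tensorVec (x₁ - t • (Pi.single i 1 : Fin n₁ → ℝ))
        (x₂ - t • (Pi.single j 1 : Fin n₂ → ℝ))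
      = tensorVec x₁ x₂ + (t * t) • (Pi.single (i, j) 1 : Fin n₁ × Fin n₂ → ℝ) := by
  funext z
  simp only [tensorVec, Pi.add_apply, Pi.sub_apply, Pi.smul_apply, smul_eq_mul,
    single_prod_eq]
  ring

lemma midpoint_minus {n₁ n₂ : ℕ} (x₁ : Fin n₁ → ℝ) (x₂ : Fin n₂ → ℝ)
    (i : Fin n₁) (j : Fin n₂) (t : ℝ) :
    (1/2 : ℝ) • tensorVec (x₁ + t • (Pi.single i 1 : Fin n₁ → ℝ))
        (x₂ - t • (Pi.single j 1 : Fin n₂ → ℝ))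
      + (1/2 : ℝ) • tensorVec (x₁ - t • (Pi.single i 1 : Fin n₁ → ℝ))
        (x₂ + t • (Pi.single j 1 : Fin n₂ → ℝ))
      = tensorVec x₁ x₂ - (t * t) • (Pi.single (i, j) 1 : Fin n₁ × Fin n₂ → ℝ) := by
  funext z
  simp only [tensorVec, Pi.add_apply, Pi.sub_apply, Pi.smul_apply, smul_eq_mul,
    single_prod_eq]
  ring

/-- If `x₁ ∈ int K₁` and `x₂ ∈ int K₂` for proper cones `K₁, K₂`, then
`x₁ ⊗ x₂ ∈ int (K₁ ⊗ K₂)`. -/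
theorem tensorVec_mem_interior_tensorCone {n₁ n₂ : ℕ}
    (K₁ : Set (Fin n₁ → ℝ)) (K₂ : Set (Fin n₂ → ℝ))
    (hK₁ : IsProperCone K₁) (hK₂ : IsProperCone K₂)
    (x₁ : Fin n₁ → ℝ) (x₂ : Fin n₂ → ℝ)
    (hx₁ : x₁ ∈ interior K₁) (hx₂ : x₂ ∈ interior K₂) :
    tensorVec x₁ x₂ ∈ interior (tensorCone K₁ K₂) := by
  obtain ⟨ε₁, hε₁, hb₁⟩ := Metric.isOpen_iff.mp isOpen_interior x₁ hx₁
  obtain ⟨ε₂, hε₂, hb₂⟩ := Metric.isOpen_iff.mp isOpen_interior x₂ hx₂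
  set t : ℝ := min ε₁ ε₂ / 2 with htdef
  have ht : 0 < t := by positivity
  have hm1 : min ε₁ ε₂ ≤ ε₁ := min_le_left _ _
  have hm2 : min ε₁ ε₂ ≤ ε₂ := min_le_right _ _
  have ht₁ : t < ε₁ := by rw [htdef]; linarith
  have ht₂ : t < ε₂ := by rw [htdef]; linarith
  -- membership of perturbed points
  have hmem₁ : ∀ (s : ℝ), |s| < ε₁ → ∀ i : Fin n₁,
      x₁ + s • (Pi.single i 1 : Fin n₁ → ℝ) ∈ K₁ := by
    intro s hs i
    apply interior_subset
    apply hb₁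
    rw [Metric.mem_ball, dist_eq_norm, add_sub_cancel_left, norm_smul,
      Pi.norm_single, norm_one, mul_one]
    exact hs
  have hmem₂ : ∀ (s : ℝ), |s| < ε₂ → ∀ j : Fin n₂,
      x₂ + s • (Pi.single j 1 : Fin n₂ → ℝ) ∈ K₂ := by
    intro s hs j
    apply interior_subset
    apply hb₂
    rw [Metric.mem_ball, dist_eq_norm, add_sub_cancel_left, norm_smul,
      Pi.norm_single, norm_one, mul_one]
    exact hs
  have habs : |t| < ε₁ := by rw [abs_of_pos ht]; exact ht₁
  have habs' : |(-t)| < ε₁ := by rw [abs_neg, abs_of_pos ht]; exact ht₁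
  have habs₂ : |t| < ε₂ := by rw [abs_of_pos ht]; exact ht₂
  have habs₂' : |(-t)| < ε₂ := by rw [abs_neg, abs_of_pos ht]; exact ht₂
  set S : Set (Fin n₁ × Fin n₂ → ℝ) := {z | ∃ x ∈ K₁, ∃ y ∈ K₂, z = tensorVec x y}
    with hSdef
  set C : Set (Fin n₁ × Fin n₂ → ℝ) := convexHull ℝ S with hCdef
  have hC : Convex ℝ C := convex_convexHull ℝ S
  have hsub : S ⊆ C := subset_convexHull ℝ S
  have hsubK : ∀ (a : Fin n₁ → ℝ), a ∈ K₁ → ∀ (b : Fin n₂ → ℝ), b ∈ K₂ →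
      tensorVec a b ∈ C := fun a ha b hb => hsub ⟨a, ha, b, hb, rfl⟩
  have hp : tensorVec x₁ x₂ ∈ C :=
    hsubK x₁ (interior_subset hx₁) x₂ (interior_subset hx₂)
  have hplus : ∀ k : Fin n₁ × Fin n₂,
      tensorVec x₁ x₂ + (t * t) • (Pi.single k 1 : Fin n₁ × Fin n₂ → ℝ) ∈ C := by
    rintro ⟨i, j⟩
    have hsub1 : x₁ - t • (Pi.single i 1 : Fin n₁ → ℝ)
        = x₁ + (-t) • (Pi.single i 1 : Fin n₁ → ℝ) := by
      rw [neg_smul, ← sub_eq_add_neg]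
    have hsub2 : x₂ - t • (Pi.single j 1 : Fin n₂ → ℝ)
        = x₂ + (-t) • (Pi.single j 1 : Fin n₂ → ℝ) := by
      rw [neg_smul, ← sub_eq_add_neg]
    have m1 : tensorVec (x₁ + t • (Pi.single i 1 : Fin n₁ → ℝ))
        (x₂ + t • (Pi.single j 1 : Fin n₂ → ℝ)) ∈ C :=
      hsubK _ (hmem₁ t habs i) _ (hmem₂ t habs₂ j)
    have m2 : tensorVec (x₁ - t • (Pi.single i 1 : Fin n₁ → ℝ))
        (x₂ - t • (Pi.single j 1 : Fin n₂ → ℝ)) ∈ C := by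
      rw [hsub1, hsub2]
      exact hsubK _ (hmem₁ (-t) habs' i) _ (hmem₂ (-t) habs₂' j)
    have hcomb := hC m1 m2 (by norm_num) (by norm_num)
      (by norm_num : (1/2 : ℝ) + 1/2 = 1)
    rwa [midpoint_plus] at hcomb
  have hminus : ∀ k : Fin n₁ × Fin n₂,
      tensorVec x₁ x₂ - (t * t) • (Pi.single k 1 : Fin n₁ × Fin n₂ → ℝ) ∈ C := by
    rintro ⟨i, j⟩
    have hsub1 : x₁ - t • (Pi.single i 1 : Fin n₁ → ℝ)
        = x₁ + (-t) • (Pi.single i 1 : Fin n₁ → ℝ) := by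
      rw [neg_smul, ← sub_eq_add_neg]
    have hsub2 : x₂ - t • (Pi.single j 1 : Fin n₂ → ℝ)
        = x₂ + (-t) • (Pi.single j 1 : Fin n₂ → ℝ) := by
      rw [neg_smul, ← sub_eq_add_neg]
    have m1 : tensorVec (x₁ + t • (Pi.single i 1 : Fin n₁ → ℝ))
        (x₂ - t • (Pi.single j 1 : Fin n₂ → ℝ)) ∈ C := by
      rw [hsub2]
      exact hsubK _ (hmem₁ t habs i) _ (hmem₂ (-t) habs₂' j)
    have m2 : tensorVec (x₁ - t • (Pi.single i 1 : Fin n₁ → ℝ))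
        (x₂ + t • (Pi.single j 1 : Fin n₂ → ℝ)) ∈ C := by
      rw [hsub1]
      exact hsubK _ (hmem₁ (-t) habs' i) _ (hmem₂ t habs₂ j)
    have hcomb := hC m1 m2 (by norm_num) (by norm_num)
      (by norm_num : (1/2 : ℝ) + 1/2 = 1)
    rwa [midpoint_minus] at hcomb
  have hδ : 0 < t * t := by positivity
  have hint : tensorVec x₁ x₂ ∈ interior C :=
    mem_interior_of_cross hC hδ hp hplus hminus
  exact interior_mono subset_closure hint
end
end

section
/- The joint spectral subradius is not continuous as a function of the matrix set: the sets Σ_k = {[[1,1],[0,1]], [[0,0],[-1/k,1]]} satisfy ρ̌(Σ_k) = 0 for every k ∈ ℕ (since (A₁A₀^k)² = 0), while the limit set Σ = {[[1,1],[0,1]], [[0,0],[0,1]]} satisfies ρ̌(Σ) = 1. -/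
open Filter Matrix

noncomputable section

attribute [local instance] Matrix.normedAddCommGroup

/-- The set of all products of length `t` of matrices from `S`. -/
def prodsOf {n : ℕ} (S : Set (Matrix (Fin n) (Fin n) ℝ)) (t : ℕ) :
    Set (Matrix (Fin n) (Fin n) ℝ) :=
  {P | ∃ w : Fin t → Matrix (Fin n) (Fin n) ℝ, (∀ i, w i ∈ S) ∧ P = (List.ofFn w).prod}

/-- `r` is the joint spectral subradius of `S`. -/
def IsJSSubradius {n : ℕ} (S : Set (Matrix (Fin n) (Fin n) ℝ)) (r : ℝ) : Prop :=
  Tendsto (fun t : ℕ => sInf ((fun P => ‖P‖ ^ (t : ℝ)⁻¹) '' prodsOf S t)) atTop (nhds r)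

lemma list_prod_mem_prodsOf {n : ℕ} {S : Set (Matrix (Fin n) (Fin n) ℝ)}
    (l : List (Matrix (Fin n) (Fin n) ℝ)) (hmem : ∀ M ∈ l, M ∈ S) :
    l.prod ∈ prodsOf S l.length :=
  ⟨l.get, fun i => hmem _ (l.get_mem i), by simp [List.ofFn_get]⟩

lemma bottom_row_invariant {S : Set (Matrix (Fin 2) (Fin 2) ℝ)}
    (hS : ∀ M ∈ S, M 1 0 = 0 ∧ M 1 1 = 1)
    (l : List (Matrix (Fin 2) (Fin 2) ℝ)) (h : ∀ M ∈ l, M ∈ S) :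
    l.prod 1 0 = 0 ∧ l.prod 1 1 = 1 := by
  induction l with
  | nil => simp [Matrix.one_apply]
  | cons M l ih =>
    obtain ⟨h0, h1⟩ := hS M (h M (by simp))
    obtain ⟨ih0, ih1⟩ := ih (fun N hN => h N (by simp [hN]))
    constructor <;>
      simp [List.prod_cons, Matrix.mul_apply, Fin.sum_univ_two, h0, h1, ih0, ih1]

lemma pow_A (k : ℕ) : (!![(1:ℝ),1; 0,1]) ^ k = !![1, (k:ℝ); 0, 1] := by
  induction k with
  | zero => simp [Matrix.one_fin_two]
  | succ k ih =>
    rw [pow_succ, ih, Matrix.mul_fin_two]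
    norm_num
    ring_nf

/-- Discontinuity of the joint spectral subradius: the sets
`Σ_k = {[[1,1],[0,1]], [[0,0],[-1/k,1]]}` have subradius `0` for all `k ≥ 1`, while the
limit set `Σ = {[[1,1],[0,1]], [[0,0],[0,1]]}` has subradius `1`. -/
theorem subradius_not_continuous :
    (∀ k : ℕ, 1 ≤ k →
      IsJSSubradius ({!![(1:ℝ),1; 0,1], !![(0:ℝ),0; -(1/(k:ℝ)),1]} :
        Set (Matrix (Fin 2) (Fin 2) ℝ)) 0) ∧
    IsJSSubradius ({!![(1:ℝ),1; 0,1], !![(0:ℝ),0; 0,1]} :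
      Set (Matrix (Fin 2) (Fin 2) ℝ)) 1 := by
  constructor
  · -- part 1
    intro k hk
    set A : Matrix (Fin 2) (Fin 2) ℝ := !![(1:ℝ),1; 0,1] with hA
    set B : Matrix (Fin 2) (Fin 2) ℝ := !![(0:ℝ),0; -(1/(k:ℝ)),1] with hB
    have hk0 : (k:ℝ) ≠ 0 := Nat.cast_ne_zero.mpr (by omega)
    have hBA : B * A ^ k = !![0, 0; -(1/(k:ℝ)), 0] := by
      rw [pow_A, hB, Matrix.mul_fin_two]
      field_simp
      ext i j
      fin_cases i <;> fin_cases j <;> simp <;> ring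
    have hzero : (B * A ^ k) * (B * A ^ k) = 0 := by
      rw [hBA, Matrix.mul_fin_two]
      norm_num
      ext i j
      fin_cases i <;> fin_cases j <;> simp
    apply (tendsto_congr' ?_).mp tendsto_const_nhds
    rw [EventuallyEq, eventually_atTop]
    refine ⟨2 * k + 2, fun t ht => ?_⟩
    -- 0 ∈ prodsOf at length t
    have hmem0 : (0 : Matrix (Fin 2) (Fin 2) ℝ) ∈ prodsOf {A, B} t := by
      have hl := list_prod_mem_prodsOf (S := {A, B})
        (([B] ++ List.replicate k A ++ ([B] ++ List.replicate k A)) ++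
          List.replicate (t - (2 * k + 2)) A) ?_
      · have hlen : (([B] ++ List.replicate k A ++ ([B] ++ List.replicate k A)) ++
            List.replicate (t - (2 * k + 2)) A).length = t := by
          simp; omega
        have hprod : (([B] ++ List.replicate k A ++ ([B] ++ List.replicate k A)) ++
            List.replicate (t - (2 * k + 2)) A).prod = 0 := by
          simp only [List.prod_append, List.prod_replicate, List.prod_cons,
            List.prod_nil, mul_one]
          rw [hzero, zero_mul]
        rw [hlen, hprod] at hl
        exact hl
      · intro M hM
        simp only [List.mem_append, List.mem_replicate, List.mem_singleton] at hM
        rcases hM with ((h | h) | (h | h)) | h <;>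
          first | (rw [h]; exact Set.mem_insert_of_mem _ rfl)
                | (rw [h.2]; exact Set.mem_insert _ _)
    have hnonneg : ∀ x ∈ (fun P => ‖P‖ ^ (t : ℝ)⁻¹) '' prodsOf {A, B} t, (0:ℝ) ≤ x := by
      rintro x ⟨P, _, rfl⟩
      exact Real.rpow_nonneg (norm_nonneg _) _
    have h0mem : (0:ℝ) ∈ (fun P => ‖P‖ ^ (t : ℝ)⁻¹) '' prodsOf {A, B} t := by
      refine ⟨0, hmem0, ?_⟩
      simp only [norm_zero]
      have htpos : (0:ℕ) < t := by omega
      rw [Real.zero_rpow (by positivity)]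
    exact le_antisymm (le_csInf ⟨0, h0mem⟩ hnonneg) (csInf_le ⟨0, hnonneg⟩ h0mem)
  · -- part 2
    set A : Matrix (Fin 2) (Fin 2) ℝ := !![(1:ℝ),1; 0,1] with hA
    set B : Matrix (Fin 2) (Fin 2) ℝ := !![(0:ℝ),0; 0,1] with hB
    have hS : ∀ M ∈ ({A, B} : Set (Matrix (Fin 2) (Fin 2) ℝ)), M 1 0 = 0 ∧ M 1 1 = 1 := by
      rintro M (rfl | rfl) <;> constructor <;> simp [hA, hB]
    have hnormB : ‖B‖ = 1 := by
      refine le_antisymm ((Matrix.norm_le_iff zero_le_one).mpr fun i j => ?_) ?_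
      · fin_cases i <;> fin_cases j <;> simp [hB]
      · calc (1:ℝ) = ‖B 1 1‖ := by simp [hB]
          _ ≤ ‖B‖ := Matrix.norm_entry_le_entrywise_sup_norm B
    apply (tendsto_congr' ?_).mp tendsto_const_nhds
    rw [EventuallyEq, eventually_atTop]
    refine ⟨1, fun t ht => ?_⟩
    have hBt : B ^ t = B := by
      induction t with
      | zero => omega
      | succ t ih =>
        rcases Nat.eq_or_lt_of_le ht with h | h
        · simp [← h]
        · rw [pow_succ, ih (by omega), hB, Matrix.mul_fin_two]
          norm_num
    have hone : (1:ℝ) ∈ (fun P => ‖P‖ ^ (t : ℝ)⁻¹) '' prodsOf {A, B} t := by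
      have hl := list_prod_mem_prodsOf (S := {A, B}) (List.replicate t B)
        (fun M hM => by simp [List.eq_of_mem_replicate hM])
      rw [List.length_replicate, List.prod_replicate, hBt] at hl
      exact ⟨B, hl, by simp [hnormB]⟩
    have hge : ∀ x ∈ (fun P => ‖P‖ ^ (t : ℝ)⁻¹) '' prodsOf {A, B} t, (1:ℝ) ≤ x := by
      rintro x ⟨P, ⟨w, hw, rfl⟩, rfl⟩
      have h11 := (bottom_row_invariant hS (List.ofFn w)
        (fun M hM => by obtain ⟨i, rfl⟩ := List.mem_ofFn.mp hM; exact hw i)).2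
      have hP : (1:ℝ) ≤ ‖(List.ofFn w).prod‖ := by
        calc (1:ℝ) = ‖(List.ofFn w).prod 1 1‖ := by rw [h11]; simp
          _ ≤ _ := Matrix.norm_entry_le_entrywise_sup_norm _
      calc (1:ℝ) = 1 ^ (t:ℝ)⁻¹ := (Real.one_rpow _).symm
        _ ≤ _ := Real.rpow_le_rpow zero_le_one hP (by positivity)
    exact le_antisymm (le_csInf ⟨1, hone⟩ hge) (csInf_le ⟨1, hge⟩ hone)
end
end

section
/- Let Σ = {A₁,…,A_m} be a finite set of n×n real matrices sharing an invariant proper cone K, with at least one A_i K-primitive. Then max{ρ(A)^{1/t} : A ∈ Σ^t} converges to the joint spectral radius ρ(Σ) as t → ∞, where ρ(A) denotes the (ordinary) spectral radius of the matrix A. -/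
open Filter Matrix
open scoped ENNReal NNReal

noncomputable section

section SpecAux
section SpecAux
variable {n : ℕ}
attribute [local instance] Matrix.linftyOpNormedRing Matrix.linftyOpNormedAlgebra

@[local instance] def matCS : CompleteSpace (Matrix (Fin n) (Fin n) ℂ) :=
  FiniteDimensional.complete ℂ (Matrix (Fin n) (Fin n) ℂ)

lemma entry_nnnorm_le (M : Matrix (Fin n) (Fin n) ℂ) (i j : Fin n) : ‖M i j‖₊ ≤ ‖M‖₊ := by
  rw [Matrix.linfty_opNNNorm_def]
  exact le_trans (Finset.single_le_sum (f := fun j => ‖M i j‖₊) (by simp) (Finset.mem_univ j))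
    (Finset.le_sup (f := fun i => ∑ j, ‖M i j‖₊) (Finset.mem_univ i))

lemma map_ofReal_pow (P : Matrix (Fin n) (Fin n) ℝ) (k : ℕ) :
    (P.map Complex.ofReal) ^ k = (P ^ k).map Complex.ofReal := by
  have : (P.map (Complex.ofRealHom : ℝ →+* ℂ)) ^ k = (P ^ k).map Complex.ofRealHom := by
    induction k with
    | zero => exact (Matrix.map_one _ (map_zero _) (map_one _)).symm
    | succ k ih => rw [pow_succ, pow_succ, ih, Matrix.map_mul]
  exact this

lemma specRad_ne_top (P : Matrix (Fin n) (Fin n) ℝ) :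
    spectralRadius ℂ (P.map Complex.ofReal) ≠ ⊤ := by
  rcases Nat.eq_zero_or_pos n with hn | hn
  · subst hn
    haveI : Subsingleton (Matrix (Fin 0) (Fin 0) ℂ) :=
      ⟨fun a b => by ext i j; exact absurd i.2 (by omega)⟩
    rw [spectrum.SpectralRadius.of_subsingleton]; exact ENNReal.zero_ne_top
  · haveI : Nonempty (Fin n) := Fin.pos_iff_nonempty.mp hn
    exact ne_top_of_le_ne_top ENNReal.coe_ne_top
      (spectrum.spectralRadius_le_nnnorm (𝕜 := ℂ) _)

lemma specAux_le (P : Matrix (Fin n) (Fin n) ℝ) (C : ℝ) (hC : 0 ≤ C)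
    (h : ∀ i j, |P i j| ≤ C) :
    (spectralRadius ℂ (P.map Complex.ofReal)).toReal ≤ n * C := by
  rcases Nat.eq_zero_or_pos n with hn | hn
  · subst hn
    haveI : Subsingleton (Matrix (Fin 0) (Fin 0) ℂ) :=
      ⟨fun a b => by ext i j; exact absurd i.2 (by omega)⟩
    rw [spectrum.SpectralRadius.of_subsingleton]; simp
  · haveI : Nonempty (Fin n) := Fin.pos_iff_nonempty.mp hn
    have h1 : spectralRadius ℂ (P.map Complex.ofReal) ≤ ‖P.map Complex.ofReal‖₊ :=
      spectrum.spectralRadius_le_nnnorm (𝕜 := ℂ) _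
    have h2 : ‖P.map Complex.ofReal‖₊ ≤ Real.toNNReal (n * C) := by
      rw [Matrix.linfty_opNNNorm_def]
      refine Finset.sup_le fun i _ => ?_
      calc ∑ j, ‖(P.map Complex.ofReal) i j‖₊ ≤ ∑ _j : Fin n, Real.toNNReal C := by
            refine Finset.sum_le_sum fun j _ => ?_
            have : ‖(P.map Complex.ofReal) i j‖₊ = ‖P i j‖₊ := Complex.nnnorm_real _
            rw [this, ← Real.nnnorm_abs, ← Real.toNNReal_eq_nnnorm_of_nonneg (abs_nonneg _)]
            exact Real.toNNReal_le_toNNReal (h i j)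
        _ = n * Real.toNNReal C := by simp [mul_comm]
        _ ≤ Real.toNNReal (n * C) := by
            rw [Real.toNNReal_mul (by positivity)]
            simp
    calc (spectralRadius ℂ (P.map Complex.ofReal)).toReal
        ≤ ((Real.toNNReal (n * C) : ℝ≥0∞)).toReal :=
          ENNReal.toReal_mono ENNReal.coe_ne_top (le_trans h1 (by exact_mod_cast h2))
      _ = n * C := by rw [ENNReal.coe_toReal, Real.coe_toNNReal _ (mul_nonneg (by positivity) hC)]

lemma specAux_ge (M : Matrix (Fin n) (Fin n) ℝ) (α c : ℝ) (hc : 0 < c) (hα : 0 ≤ α)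
    (h : ∀ k : ℕ, ∃ i j, c * α ^ k ≤ |(M ^ k) i j|) :
    α ≤ (spectralRadius ℂ (M.map Complex.ofReal)).toReal := by
  have hle : ∀ k : ℕ, ENNReal.ofReal (c * α ^ k) ≤ (‖(M.map Complex.ofReal) ^ k‖₊ : ℝ≥0∞) := by
    intro k
    obtain ⟨i, j, hij⟩ := h k
    calc ENNReal.ofReal (c * α ^ k) ≤ ENNReal.ofReal |(M ^ k) i j| :=
          ENNReal.ofReal_le_ofReal hij
      _ = (‖(M ^ k) i j‖₊ : ℝ≥0∞) := (Real.enorm_eq_ofReal_abs _).symm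
      _ ≤ (‖(M.map Complex.ofReal) ^ k‖₊ : ℝ≥0∞) := by
          rw [map_ofReal_pow]
          have : ‖((M ^ k).map Complex.ofReal) i j‖₊ = ‖(M ^ k) i j‖₊ := Complex.nnnorm_real _
          rw [← this]
          exact_mod_cast entry_nnnorm_le _ i j
  have hab : ∀ k : ℕ, (ENNReal.ofReal (c * α ^ k)) ^ (1 / k : ℝ) ≤
      (‖(M.map Complex.ofReal) ^ k‖₊ : ℝ≥0∞) ^ (1 / k : ℝ) := fun k =>
    ENNReal.rpow_le_rpow (hle k) (by positivity)
  have hA : Tendsto (fun k : ℕ => (ENNReal.ofReal (c * α ^ k)) ^ (1 / k : ℝ)) atTop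
      (nhds (ENNReal.ofReal α)) := by
    have hr : Tendsto (fun k : ℕ => (c * α ^ k) ^ (1 / k : ℝ)) atTop (nhds α) := by
      have h1 : Tendsto (fun k : ℕ => c ^ (1 / k : ℝ) * α) atTop (nhds α) := by
        have := (Filter.Tendsto.rpow (tendsto_const_nhds (x := c))
          (tendsto_one_div_atTop_nhds_zero_nat) (Or.inl hc.ne')) |>.mul_const α
        simpa using this
      refine h1.congr' ?_
      filter_upwards [eventually_ge_atTop 1] with k hk
      have hk0 : (k : ℝ) ≠ 0 := by positivity
      rw [Real.mul_rpow hc.le (by positivity), ← Real.rpow_natCast α k,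
        ← Real.rpow_mul hα]
      rw [mul_one_div, div_self hk0, Real.rpow_one]
    have := (ENNReal.tendsto_ofReal hr)
    refine this.congr ?_
    intro k
    rw [← ENNReal.ofReal_rpow_of_nonneg (by positivity) (by positivity)]
  have hlim : ENNReal.ofReal α ≤
      limsup (fun k : ℕ => (‖(M.map Complex.ofReal) ^ k‖₊ : ℝ≥0∞) ^ (1 / k : ℝ)) atTop := by
    rw [← hA.limsup_eq]
    exact Filter.limsup_le_limsup (Eventually.of_forall hab)
  have := le_trans hlim (spectrum.limsup_pow_nnnorm_pow_one_div_le_spectralRadius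
    (M.map Complex.ofReal))
  calc α = (ENNReal.ofReal α).toReal := by rw [ENNReal.toReal_ofReal hα]
    _ ≤ _ := ENNReal.toReal_mono (specRad_ne_top M) this
lemma specAux_zero (P : Matrix (Fin 0) (Fin 0) ℝ) :
    (spectralRadius ℂ (P.map Complex.ofReal)).toReal = 0 := by
  haveI : Subsingleton (Matrix (Fin 0) (Fin 0) ℂ) := ⟨fun a b => by ext i j; exact i.elim0⟩
  rw [spectrum.SpectralRadius.of_subsingleton]
  simp

lemma specAux_ge' {n : ℕ} (M : Matrix (Fin n) (Fin n) ℝ) (α c : ℝ) (hc : 0 < c) (hα : 0 ≤ α)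
    (h : ∀ k : ℕ, ∃ i j, c * α ^ k ≤ |(M ^ k) i j|) :
    α ≤ (spectralRadius ℂ (M.map Complex.ofReal)).toReal := specAux_ge M α c hc hα h

end SpecAux


attribute [local instance] Matrix.normedAddCommGroup

/-- `A` is `K`-primitive: `A K ⊆ K` and some power `A^t` maps `K \ {0}` into `int K`. -/
def KPrimitive {n : ℕ} (K : Set (Fin n → ℝ)) (A : Matrix (Fin n) (Fin n) ℝ) : Prop :=
  (∀ x ∈ K, A.mulVec x ∈ K) ∧ ∃ t : ℕ, ∀ x ∈ K, x ≠ 0 → (A ^ t).mulVec x ∈ interior K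

/-- `r` is the joint spectral radius of `S`. -/
def IsJSRadius {n : ℕ} (S : Set (Matrix (Fin n) (Fin n) ℝ)) (r : ℝ) : Prop :=
  Tendsto (fun t : ℕ => sSup ((fun P => ‖P‖ ^ (t : ℝ)⁻¹) '' prodsOf S t)) atTop (nhds r)

/-- The (ordinary) spectral radius of a real matrix: the spectral radius of its
complexification. -/
def specRad {n : ℕ} (P : Matrix (Fin n) (Fin n) ℝ) : ℝ :=
  (spectralRadius ℂ (P.map (Complex.ofReal))).toReal

section Aux

variable {n : ℕ} {S : Set (Matrix (Fin n) (Fin n) ℝ)} {K : Set (Fin n → ℝ)}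

lemma prodsOf_mul {t₁ t₂ : ℕ} {P Q : Matrix (Fin n) (Fin n) ℝ}
    (hP : P ∈ prodsOf S t₁) (hQ : Q ∈ prodsOf S t₂) : P * Q ∈ prodsOf S (t₁ + t₂) := by
  obtain ⟨w₁, hw₁, rfl⟩ := hP
  obtain ⟨w₂, hw₂, rfl⟩ := hQ
  refine ⟨Fin.append w₁ w₂, ?_, by rw [List.ofFn_fin_append, List.prod_append]⟩
  intro i
  refine Fin.addCases (fun i => ?_) (fun i => ?_) i
  · simpa [Fin.append_left] using hw₁ i
  · simpa [Fin.append_right] using hw₂ i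

lemma pow_mem_prodsOf {B : Matrix (Fin n) (Fin n) ℝ} (hB : B ∈ S) (s : ℕ) :
    B ^ s ∈ prodsOf S s :=
  ⟨fun _ => B, fun _ => hB, by rw [List.ofFn_const, List.prod_replicate]⟩

lemma prodsOf_preserve (hS : ∀ B ∈ S, ∀ x ∈ K, B *ᵥ x ∈ K) {t : ℕ}
    {P : Matrix (Fin n) (Fin n) ℝ} (hP : P ∈ prodsOf S t) : ∀ x ∈ K, P *ᵥ x ∈ K := by
  obtain ⟨w, hw, rfl⟩ := hP
  have main : ∀ l : List (Matrix (Fin n) (Fin n) ℝ),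
      (∀ B ∈ l, ∀ x ∈ K, B *ᵥ x ∈ K) → ∀ x ∈ K, l.prod *ᵥ x ∈ K := by
    intro l
    induction l with
    | nil => intro _ x hx; simpa [Matrix.one_mulVec] using hx
    | cons B l ih =>
      intro h x hx
      rw [List.prod_cons, ← Matrix.mulVec_mulVec]
      exact h B List.mem_cons_self _ (ih (fun B' hB' => h B' (List.mem_cons_of_mem _ hB')) x hx)
  refine main _ ?_
  intro B hB
  rw [List.mem_ofFn] at hB
  obtain ⟨i, rfl⟩ := hB
  exact hS _ (hw i)

lemma prodsOf_range_finite {m : ℕ} (A : Fin m → Matrix (Fin n) (Fin n) ℝ) (t : ℕ) :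
    (prodsOf (Set.range A) t).Finite := by
  have hsub : prodsOf (Set.range A) t ⊆
      (fun c : Fin t → Fin m => (List.ofFn fun i => A (c i)).prod) '' Set.univ := by
    rintro P ⟨w, hw, rfl⟩
    choose c hc using fun i => hw i
    refine ⟨c, Set.mem_univ _, ?_⟩
    simp only []
    congr 1
    exact congrArg List.ofFn (funext hc)
  exact (Set.finite_univ.image _).subset hsub


variable {K : Set (Fin n → ℝ)}


lemma exists_pos_functional (hcl : IsClosed K) (hconv : Convex ℝ K)
    (hscale : ∀ c : ℝ, 0 ≤ c → ∀ x ∈ K, c • x ∈ K) (hsal : ∀ x ∈ K, x ≠ 0 → -x ∉ K)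
    (h0K : (0 : Fin n → ℝ) ∈ K) {u : Fin n → ℝ} (huK : u ∈ K) (hune : u ≠ 0) :
    ∃ (φ : (Fin n → ℝ) →L[ℝ] ℝ) (c F : ℝ), 0 < c ∧ 0 < F ∧
      (∀ y ∈ K, c * ‖y‖ ≤ φ y) ∧ (∀ y, φ y ≤ F * ‖y‖) := by
  classical
  -- pointwise functionals
  have hpt : ∀ x : Fin n → ℝ, x ∈ K → x ≠ 0 →
      ∃ ψ : (Fin n → ℝ) →L[ℝ] ℝ, (∀ y ∈ K, 0 ≤ ψ y) ∧ 0 < ψ x := by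
    intro x hx hxne
    obtain ⟨f, β, hfb, hfK⟩ := geometric_hahn_banach_point_closed hconv hcl (hsal x hx hxne)
    have hβ0 : β < 0 := by simpa using hfK 0 h0K
    have hfKnn : ∀ y ∈ K, 0 ≤ f y := by
      intro y hy
      by_contra hneg
      push_neg at hneg
      have ht0 : (0:ℝ) < β / f y + 1 := by
        have : 0 < β / f y := div_pos_of_neg_of_neg hβ0 hneg
        linarith
      have := hfK _ (hscale _ ht0.le y hy)
      rw [_root_.map_smul, smul_eq_mul] at this
      have : β < (β / f y + 1) * f y := this
      rw [add_mul, div_mul_cancel₀ _ hneg.ne] at this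
      linarith
    refine ⟨f, hfKnn, ?_⟩
    have : f (-x) < β := hfb
    rw [map_neg] at this
    linarith
  -- compact slice
  set Ks : Set (Fin n → ℝ) := K ∩ Metric.sphere 0 1 with hKs
  have hKscomp : IsCompact Ks := (isCompact_sphere (0 : Fin n → ℝ) 1).inter_left hcl
  have hx₀ : ‖u‖⁻¹ • u ∈ Ks := by
    constructor
    · exact hscale _ (inv_nonneg.mpr (norm_nonneg u)) u huK
    · rw [mem_sphere_zero_iff_norm, norm_smul, norm_inv, norm_norm,
        inv_mul_cancel₀ (norm_ne_zero_iff.mpr hune)]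
  have hmem_ne : ∀ z : Fin n → ℝ, z ∈ Ks → z ≠ 0 := by
    intro z hz
    have := hz.2
    rw [mem_sphere_zero_iff_norm] at this
    intro h
    rw [h, norm_zero] at this
    norm_num at this
  choose ψ hψnn hψpos using fun (z : Ks) => hpt z.1 z.2.1 (hmem_ne z.1 z.2)
  have hcover : Ks ⊆ ⋃ z : Ks, {y | 0 < ψ z y} := by
    intro x hx
    exact Set.mem_iUnion.mpr ⟨⟨x, hx⟩, hψpos ⟨x, hx⟩⟩
  obtain ⟨tf, htf⟩ := hKscomp.elim_finite_subcover (fun z : Ks => {y | 0 < ψ z y})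
    (fun z => isOpen_lt continuous_const (ψ z).continuous) hcover
  set φ : (Fin n → ℝ) →L[ℝ] ℝ := ∑ z ∈ tf, ψ z with hφ
  have hφapp : ∀ y, φ y = ∑ z ∈ tf, ψ z y := by
    intro y; rw [hφ]; simp [ContinuousLinearMap.sum_apply]
  have hφK : ∀ y ∈ K, 0 ≤ φ y := by
    intro y hy; rw [hφapp]
    exact Finset.sum_nonneg fun z _ => hψnn z y hy
  have hφpos : ∀ y ∈ Ks, 0 < φ y := by
    intro y hy
    obtain ⟨z, hz, hzy⟩ := Set.mem_iUnion₂.mp (htf hy)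
    rw [hφapp]
    exact Finset.sum_pos' (fun z' _ => hψnn z' y hy.1) ⟨z, hz, hzy⟩
  obtain ⟨z₀, hz₀Ks, hz₀min⟩ := hKscomp.exists_isMinOn ⟨_, hx₀⟩ φ.continuous.continuousOn
  set c := φ z₀ with hc
  have hcpos : 0 < c := hφpos z₀ hz₀Ks
  refine ⟨φ, c, ‖φ‖ + 1, hcpos, by positivity, ?_, ?_⟩
  · intro y hy
    rcases eq_or_ne y 0 with rfl | hyne
    · simp
    · have hy' : ‖y‖⁻¹ • y ∈ Ks := by
        constructor
        · exact hscale _ (inv_nonneg.mpr (norm_nonneg y)) y hy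
        · rw [mem_sphere_zero_iff_norm, norm_smul, norm_inv, norm_norm,
            inv_mul_cancel₀ (norm_ne_zero_iff.mpr hyne)]
      have h1 : c ≤ φ (‖y‖⁻¹ • y) := hz₀min hy'
      have h2 : φ (‖y‖⁻¹ • y) = ‖y‖⁻¹ * φ y := by rw [_root_.map_smul, smul_eq_mul]
      rw [h2] at h1
      have hpos : (0:ℝ) < ‖y‖ := norm_pos_iff.mpr hyne
      calc c * ‖y‖ ≤ (‖y‖⁻¹ * φ y) * ‖y‖ := by
            exact mul_le_mul_of_nonneg_right h1 hpos.le
        _ = φ y := by field_simp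
  · intro y
    calc φ y ≤ |φ y| := le_abs_self _
      _ ≤ ‖φ‖ * ‖y‖ := φ.le_opNorm y
      _ ≤ (‖φ‖ + 1) * ‖y‖ := by
          exact mul_le_mul_of_nonneg_right (by linarith) (norm_nonneg y)

lemma exists_delta {Bs : Matrix (Fin n) (Fin n) ℝ}
    (hcl : IsClosed K) (h0K : (0 : Fin n → ℝ) ∈ K)
    (hscale : ∀ c : ℝ, 0 ≤ c → ∀ x ∈ K, c • x ∈ K)
    {u : Fin n → ℝ} (hune : u ≠ 0)
    (hBsInt : ∀ x ∈ K, x ≠ 0 → Bs *ᵥ x ∈ interior K) :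
    ∃ δ : ℝ, 0 < δ ∧ ∀ x ∈ K, (Bs *ᵥ x) - (δ * ‖x‖) • u ∈ K := by
  classical
  set Ks : Set (Fin n → ℝ) := K ∩ Metric.sphere 0 1 with hKs
  have hKscomp : IsCompact Ks := (isCompact_sphere (0 : Fin n → ℝ) 1).inter_left hcl
  have hcont : Continuous fun x : Fin n → ℝ => Bs *ᵥ x := by
    have := LinearMap.continuous_of_finiteDimensional (Bs.mulVecLin)
    exact this
  have hVcomp : IsCompact ((fun x => Bs *ᵥ x) '' Ks) := hKscomp.image hcont
  have hVsub : (fun x => Bs *ᵥ x) '' Ks ⊆ interior K := by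
    rintro _ ⟨x, hx, rfl⟩
    refine hBsInt x hx.1 ?_
    intro h
    have := hx.2
    rw [mem_sphere_zero_iff_norm, h, norm_zero] at this
    norm_num at this
  obtain ⟨δ₀, hδ₀pos, hth⟩ := hVcomp.exists_thickening_subset_open isOpen_interior hVsub
  have hupos : (0:ℝ) < ‖u‖ := norm_pos_iff.mpr hune
  refine ⟨δ₀ / (2 * ‖u‖), by positivity, ?_⟩
  intro x hx
  rcases eq_or_ne x 0 with rfl | hxne
  · simpa [Matrix.mulVec_zero] using h0K
  · have hxpos : (0:ℝ) < ‖x‖ := norm_pos_iff.mpr hxne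
    have hx' : ‖x‖⁻¹ • x ∈ Ks := by
      constructor
      · exact hscale _ (inv_nonneg.mpr (norm_nonneg x)) x hx
      · rw [mem_sphere_zero_iff_norm, norm_smul, norm_inv, norm_norm,
          inv_mul_cancel₀ hxpos.ne']
    set p : Fin n → ℝ := (Bs *ᵥ (‖x‖⁻¹ • x)) - (δ₀ / (2 * ‖u‖)) • u with hp
    have hpK : p ∈ K := by
      have hmem : p ∈ Metric.thickening δ₀ ((fun x => Bs *ᵥ x) '' Ks) := by
        rw [Metric.mem_thickening_iff]
        refine ⟨Bs *ᵥ (‖x‖⁻¹ • x), ⟨_, hx', rfl⟩, ?_⟩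
        rw [hp, dist_eq_norm, sub_sub_cancel_left, norm_neg, norm_smul, Real.norm_eq_abs,
          abs_of_pos (by positivity)]
        calc δ₀ / (2 * ‖u‖) * ‖u‖ = δ₀ / 2 := by field_simp
          _ < δ₀ := by linarith
      exact interior_subset (hth hmem)
    have := hscale ‖x‖ (norm_nonneg x) p hpK
    have heq : ‖x‖ • p = (Bs *ᵥ x) - (δ₀ / (2 * ‖u‖) * ‖x‖) • u := by
      rw [hp, smul_sub, ← Matrix.mulVec_smul, smul_smul, smul_smul,
        mul_inv_cancel₀ hxpos.ne', one_smul]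
      ring_nf
    rwa [heq] at this


lemma norm_le_of_cone (h0K : (0 : Fin n → ℝ) ∈ K)
    (hscale : ∀ c : ℝ, 0 ≤ c → ∀ x ∈ K, c • x ∈ K)
    {u : Fin n → ℝ} (huK : u ∈ K)
    {ε : ℝ} (hε : 0 < ε) (hu_up : ∀ z : Fin n → ℝ, ‖z‖ ≤ 1 → u + ε • z ∈ K)
    {φ : (Fin n → ℝ) →L[ℝ] ℝ} {c F : ℝ} (hc : 0 < c) (hF : 0 < F)
    (hφl : ∀ y ∈ K, c * ‖y‖ ≤ φ y) (hφu : ∀ y, φ y ≤ F * ‖y‖)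
    {P : Matrix (Fin n) (Fin n) ℝ} (hPK : ∀ x ∈ K, P *ᵥ x ∈ K) :
    ‖P‖ ≤ (ε⁻¹ * (2 * (ε⁻¹ * (‖u‖ + ε) * F / c))) * ‖P *ᵥ u‖ := by
  classical
  have hφ0 : ∀ y ∈ K, 0 ≤ φ y := fun y hy => le_trans (by positivity) (hφl y hy)
  have hupK : ∀ y ∈ K, (ε⁻¹ * ‖y‖) • u - y ∈ K := by
    intro y hy
    rcases eq_or_ne y 0 with rfl | hyne
    · simpa using h0K
    · have hynorm : ‖y‖ ≠ 0 := norm_ne_zero_iff.mpr hyne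
      have hz : ‖-(‖y‖⁻¹ • y)‖ ≤ 1 := by
        rw [norm_neg, norm_smul, norm_inv, norm_norm, inv_mul_cancel₀ hynorm]
      have h2 := hscale (ε⁻¹ * ‖y‖) (by positivity) _ (hu_up _ hz)
      have heq : (ε⁻¹ * ‖y‖) • (u + ε • -(‖y‖⁻¹ • y)) = (ε⁻¹ * ‖y‖) • u - y := by
        simp only [smul_add, smul_neg, smul_smul]
        rw [show ε⁻¹ * ‖y‖ * (ε * ‖y‖⁻¹) = 1 from by field_simp, one_smul, sub_eq_add_neg]
      rwa [heq] at h2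
  have hPy : ∀ y ∈ K, ‖P *ᵥ y‖ ≤ (ε⁻¹ * ‖y‖ * F / c) * ‖P *ᵥ u‖ := by
    intro y hy
    have h1 : (ε⁻¹ * ‖y‖) • (P *ᵥ u) - P *ᵥ y ∈ K := by
      have := hPK _ (hupK y hy)
      rwa [Matrix.mulVec_sub, Matrix.mulVec_smul] at this
    have h2 : φ (P *ᵥ y) ≤ (ε⁻¹ * ‖y‖) * φ (P *ᵥ u) := by
      have h3 := hφ0 _ h1
      rw [map_sub, _root_.map_smul, smul_eq_mul] at h3
      linarith
    have h4 : c * ‖P *ᵥ y‖ ≤ φ (P *ᵥ y) := hφl _ (hPK y hy)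
    have h5 : φ (P *ᵥ u) ≤ F * ‖P *ᵥ u‖ := hφu _
    have h6 : (0:ℝ) ≤ ε⁻¹ * ‖y‖ := by positivity
    have h7 : c * ‖P *ᵥ y‖ ≤ (ε⁻¹ * ‖y‖) * (F * ‖P *ᵥ u‖) :=
      le_trans h4 (le_trans h2 (mul_le_mul_of_nonneg_left h5 h6))
    rw [show (ε⁻¹ * ‖y‖ * F / c) * ‖P *ᵥ u‖ = ((ε⁻¹ * ‖y‖) * (F * ‖P *ᵥ u‖)) / c from by ring,
      le_div_iff₀ hc, mul_comm]
    exact h7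
  rw [Matrix.norm_le_iff (by positivity)]
  intro i j
  set e : Fin n → ℝ := Pi.single j (1:ℝ) with he
  have hne : ‖e‖ = 1 := by rw [he, Pi.norm_single, norm_one]
  have hy₁ : u + ε • e ∈ K := hu_up e (le_of_eq hne)
  have hy₁n : ‖u + ε • e‖ ≤ ‖u‖ + ε := by
    calc ‖u + ε • e‖ ≤ ‖u‖ + ‖ε • e‖ := norm_add_le _ _
      _ = ‖u‖ + ε := by rw [norm_smul, hne, Real.norm_eq_abs, abs_of_pos hε, mul_one]
  have hPe : P *ᵥ e = ε⁻¹ • (P *ᵥ (u + ε • e) - P *ᵥ u) := by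
    have h8 : P *ᵥ (u + ε • e) - P *ᵥ u = ε • (P *ᵥ e) := by
      rw [← Matrix.mulVec_smul, ← Matrix.mulVec_sub, add_sub_cancel_left]
    rw [h8, smul_smul, inv_mul_cancel₀ hε.ne', one_smul]
  have hentry : |P i j| ≤ ‖P *ᵥ e‖ := by
    have h9 : (P *ᵥ e) i = P i j := by simp [he, Matrix.mulVec_single]
    calc |P i j| = ‖(P *ᵥ e) i‖ := by rw [h9, Real.norm_eq_abs]
      _ ≤ ‖P *ᵥ e‖ := norm_le_pi_norm _ i
  rw [Real.norm_eq_abs]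
  calc |P i j| ≤ ‖P *ᵥ e‖ := hentry
    _ = ε⁻¹ * ‖P *ᵥ (u + ε • e) - P *ᵥ u‖ := by
        rw [hPe, norm_smul, Real.norm_eq_abs, abs_of_pos (by positivity)]
    _ ≤ ε⁻¹ * (‖P *ᵥ (u + ε • e)‖ + ‖P *ᵥ u‖) := by
        gcongr
        exact norm_sub_le _ _
    _ ≤ ε⁻¹ * ((ε⁻¹ * (‖u‖ + ε) * F / c) * ‖P *ᵥ u‖ + (ε⁻¹ * (‖u‖ + ε) * F / c) * ‖P *ᵥ u‖) := by
        gcongr ε⁻¹ * (?_ + ?_)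
        · calc ‖P *ᵥ (u + ε • e)‖ ≤ (ε⁻¹ * ‖u + ε • e‖ * F / c) * ‖P *ᵥ u‖ := hPy _ hy₁
            _ ≤ (ε⁻¹ * (‖u‖ + ε) * F / c) * ‖P *ᵥ u‖ := by gcongr
        · calc ‖P *ᵥ u‖ ≤ (ε⁻¹ * ‖u‖ * F / c) * ‖P *ᵥ u‖ := hPy _ huK
            _ ≤ (ε⁻¹ * (‖u‖ + ε) * F / c) * ‖P *ᵥ u‖ := by gcongr; linarith
    _ = (ε⁻¹ * (2 * (ε⁻¹ * (‖u‖ + ε) * F / c))) * ‖P *ᵥ u‖ := by ring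

lemma specRad_ge_of_cone (h0K : (0 : Fin n → ℝ) ∈ K)
    (hadd : ∀ a ∈ K, ∀ b ∈ K, a + b ∈ K)
    (hscale : ∀ c : ℝ, 0 ≤ c → ∀ x ∈ K, c • x ∈ K)
    {u : Fin n → ℝ} (huK : u ∈ K) (hune : u ≠ 0)
    {φ : (Fin n → ℝ) →L[ℝ] ℝ} {c F : ℝ} (hc : 0 < c) (hF : 0 < F)
    (hφl : ∀ y ∈ K, c * ‖y‖ ≤ φ y) (hφu : ∀ y, φ y ≤ F * ‖y‖)
    {Bs : Matrix (Fin n) (Fin n) ℝ} {δ : ℝ} (hδpos : 0 < δ)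
    (hδ : ∀ x ∈ K, (Bs *ᵥ x) - (δ * ‖x‖) • u ∈ K)
    {P : Matrix (Fin n) (Fin n) ℝ} (hPK : ∀ x ∈ K, P *ᵥ x ∈ K)
    (hMK : ∀ x ∈ K, (Bs * P * Bs) *ᵥ x ∈ K) :
    (δ * (δ * ‖u‖ * c / F)) * ‖P *ᵥ u‖ ≤ specRad (Bs * P * Bs) := by
  classical
  have hspecnn : (0:ℝ) ≤ specRad (Bs * P * Bs) := ENNReal.toReal_nonneg
  rcases eq_or_ne ‖P *ᵥ u‖ 0 with hPu0 | hPune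
  · rw [hPu0, mul_zero]; exact hspecnn
  have hPupos : 0 < ‖P *ᵥ u‖ := (norm_nonneg _).lt_of_ne' hPune
  have hupos : (0:ℝ) < ‖u‖ := norm_pos_iff.mpr hune
  have hn : 0 < n := by
    rcases Nat.eq_zero_or_pos n with h | h
    · subst h; exact absurd (funext fun i => i.elim0) hune
    · exact h
  have hφ0 : ∀ y ∈ K, 0 ≤ φ y := fun y hy => le_trans (by positivity) (hφl y hy)
  set w : Fin n → ℝ := P *ᵥ (Bs *ᵥ u) with hw
  have hBsuK : Bs *ᵥ u ∈ K := by
    have := hadd _ (hδ u huK) _ (hscale (δ * ‖u‖) (by positivity) u huK)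
    simpa [sub_add_cancel] using this
  have hwK : w ∈ K := hPK _ hBsuK
  have hw1 : w - (δ * ‖u‖) • (P *ᵥ u) ∈ K := by
    have := hPK _ (hδ u huK)
    rwa [Matrix.mulVec_sub, Matrix.mulVec_smul] at this
  have hφw : (δ * ‖u‖) * (c * ‖P *ᵥ u‖) ≤ φ w := by
    have h3 := hφ0 _ hw1
    rw [map_sub, _root_.map_smul, smul_eq_mul] at h3
    have h4 := hφl _ (hPK u huK)
    have h5 := mul_le_mul_of_nonneg_left h4 (show (0:ℝ) ≤ δ * ‖u‖ by positivity)
    linarith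
  have hnw : (δ * ‖u‖ * c / F) * ‖P *ᵥ u‖ ≤ ‖w‖ := by
    have h5 := hφu w
    rw [div_mul_eq_mul_div, div_le_iff₀ hF]
    have e1 : δ * ‖u‖ * c * ‖P *ᵥ u‖ = (δ * ‖u‖) * (c * ‖P *ᵥ u‖) := by ring
    have e2 : ‖w‖ * F = F * ‖w‖ := mul_comm _ _
    linarith
  set α : ℝ := (δ * (δ * ‖u‖ * c / F)) * ‖P *ᵥ u‖ with hα
  have hαpos : 0 < α := by rw [hα]; positivity
  have hMu : (Bs * P * Bs) *ᵥ u - α • u ∈ K := by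
    have h6 := hδ w hwK
    have hMw : (Bs * P * Bs) *ᵥ u = Bs *ᵥ w := by
      rw [← Matrix.mulVec_mulVec, ← Matrix.mulVec_mulVec, hw]
    have hαle : α ≤ δ * ‖w‖ := by
      rw [hα]
      calc (δ * (δ * ‖u‖ * c / F)) * ‖P *ᵥ u‖ = δ * ((δ * ‖u‖ * c / F) * ‖P *ᵥ u‖) := by ring
        _ ≤ δ * ‖w‖ := mul_le_mul_of_nonneg_left hnw hδpos.le
    have h7 : (δ * ‖w‖ - α) • u ∈ K := hscale _ (by linarith) u huK
    have h8 := hadd _ h6 _ h7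
    have heq : (Bs *ᵥ w - (δ * ‖w‖) • u) + (δ * ‖w‖ - α) • u = (Bs * P * Bs) *ᵥ u - α • u := by
      rw [hMw, sub_smul]
      abel
    rwa [heq] at h8
  have hind : ∀ k : ℕ, ((Bs * P * Bs) ^ k) *ᵥ u - (α ^ k) • u ∈ K := by
    intro k
    induction k with
    | zero => simpa [Matrix.one_mulVec] using h0K
    | succ k ih =>
      have t1 : (Bs * P * Bs) *ᵥ (((Bs * P * Bs) ^ k) *ᵥ u - (α ^ k) • u) ∈ K := hMK _ ih
      have t2 : (α ^ k) • ((Bs * P * Bs) *ᵥ u - α • u) ∈ K :=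
        hscale _ (by positivity) _ hMu
      have h8 := hadd _ t1 _ t2
      have heq : (Bs * P * Bs) *ᵥ (((Bs * P * Bs) ^ k) *ᵥ u - (α ^ k) • u) +
          (α ^ k) • ((Bs * P * Bs) *ᵥ u - α • u)
          = ((Bs * P * Bs) ^ (k+1)) *ᵥ u - (α ^ (k+1)) • u := by
        rw [Matrix.mulVec_sub, Matrix.mulVec_smul, Matrix.mulVec_mulVec, ← pow_succ',
          smul_sub, smul_smul, ← pow_succ]
        abel
      rwa [heq] at h8
  set c₀ : ℝ := (c * ‖u‖) / (F * (n * ‖u‖) + 1) with hc₀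
  have hc₀pos : 0 < c₀ := by rw [hc₀]; positivity
  have hkey : ∀ k : ℕ, ∃ i j, c₀ * α ^ k ≤ |((Bs * P * Bs) ^ k) i j| := by
    intro k
    by_contra hcon
    push_neg at hcon
    have hαk : (0:ℝ) < α ^ k := pow_pos hαpos k
    have hφk : (c * ‖u‖) * α ^ k ≤ φ (((Bs * P * Bs) ^ k) *ᵥ u) := by
      have h3 := hφ0 _ (hind k)
      rw [map_sub, _root_.map_smul, smul_eq_mul] at h3
      have h4 := hφl u huK
      have h5 := mul_le_mul_of_nonneg_right h4 hαk.le
      have h6 : φ u * α ^ k = α ^ k * φ u := mul_comm _ _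
      linarith
    have hnorm : ‖((Bs * P * Bs) ^ k) *ᵥ u‖ ≤ (n * ‖u‖) * (c₀ * α ^ k) := by
      rw [pi_norm_le_iff_of_nonneg (by positivity)]
      intro l
      have happ : (((Bs * P * Bs) ^ k) *ᵥ u) l = ∑ j, ((Bs * P * Bs) ^ k) l j * u j := by
        simp [Matrix.mulVec, dotProduct]
      rw [Real.norm_eq_abs, happ]
      calc |∑ j, ((Bs * P * Bs) ^ k) l j * u j| ≤ ∑ j, |((Bs * P * Bs) ^ k) l j * u j| :=
            Finset.abs_sum_le_sum_abs _ _
        _ ≤ ∑ _j : Fin n, (c₀ * α ^ k) * ‖u‖ := by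
            refine Finset.sum_le_sum fun j _ => ?_
            rw [abs_mul]
            refine mul_le_mul (hcon l j).le ?_ (abs_nonneg _) (by positivity)
            rw [← Real.norm_eq_abs]
            exact norm_le_pi_norm u j
        _ = (n * ‖u‖) * (c₀ * α ^ k) := by
            rw [Finset.sum_const, Finset.card_univ, Fintype.card_fin, nsmul_eq_mul]
            ring
    have h5 := hφu (((Bs * P * Bs) ^ k) *ᵥ u)
    have hlt : F * (n * ‖u‖) * c₀ < c * ‖u‖ := by
      rw [hc₀]
      have h7 : (0:ℝ) < F * (n * ‖u‖) + 1 := by positivity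
      rw [mul_div_assoc', div_lt_iff₀ h7]
      nlinarith [mul_pos hc hupos]
    have e1 : F * ‖((Bs * P * Bs) ^ k) *ᵥ u‖ ≤ F * ((n * ‖u‖) * (c₀ * α ^ k)) :=
      mul_le_mul_of_nonneg_left hnorm hF.le
    have e2 : F * ((n * ‖u‖) * (c₀ * α ^ k)) = (F * (n * ‖u‖) * c₀) * α ^ k := by ring
    have e3 : (F * (n * ‖u‖) * c₀) * α ^ k < (c * ‖u‖) * α ^ k :=
      mul_lt_mul_of_pos_right hlt hαk
    linarith
  exact specAux_ge' _ α c₀ hc₀pos hαpos.le hkey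

end Aux

/-- If a finite set of matrices shares an invariant proper cone `K` and one of them is
`K`-primitive, then the maximal normalized spectral radius of products of length `t`
converges to the joint spectral radius. -/

theorem max_spectral_radius_tendsto_jsr {n m : ℕ} (A : Fin m → Matrix (Fin n) (Fin n) ℝ)
    (K : Set (Fin n → ℝ)) (hK : IsProperCone K)
    (hinv : ∀ i, ∀ x ∈ K, (A i).mulVec x ∈ K)
    (hprim : ∃ i, KPrimitive K (A i))
    (ρ : ℝ) (hρ : IsJSRadius (Set.range A) ρ) :
    Tendsto (fun t : ℕ =>
        sSup ((fun P => specRad P ^ (t : ℝ)⁻¹) '' prodsOf (Set.range A) t)) atTop (nhds ρ) := by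
  classical
  obtain ⟨i₀, hBK0, s₀, hs₀⟩ := hprim
  have hSK : ∀ B ∈ Set.range A, ∀ x ∈ K, B *ᵥ x ∈ K := by
    rintro B ⟨i, rfl⟩
    exact hinv i
  have hPfin : ∀ t, (prodsOf (Set.range A) t).Finite := prodsOf_range_finite A
  have hPne : ∀ t, (prodsOf (Set.range A) t).Nonempty := fun t =>
    ⟨(List.ofFn fun _ : Fin t => A i₀).prod, ⟨fun _ => A i₀, fun _ => Set.mem_range_self i₀, rfl⟩⟩
  obtain ⟨hcl, hconv, hscale, ⟨u, huI⟩, hsal⟩ := hK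
  unfold IsJSRadius at hρ
  set f : ℕ → ℝ := fun t => sSup ((fun P => ‖P‖ ^ (t : ℝ)⁻¹) '' prodsOf (Set.range A) t) with hf
  set g : ℕ → ℝ :=
    fun t => sSup ((fun P => specRad P ^ (t : ℝ)⁻¹) '' prodsOf (Set.range A) t) with hg
  have hρf : Tendsto f atTop (nhds ρ) := hρ
  show Tendsto g atTop (nhds ρ)
  rcases Nat.eq_zero_or_pos n with hn0 | hn
  · subst hn0
    haveI : Subsingleton (Matrix (Fin 0) (Fin 0) ℝ) := ⟨fun a b => by ext i; exact i.elim0⟩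
    have hzero : ∀ P : Matrix (Fin 0) (Fin 0) ℝ, specRad P = ‖P‖ := by
      intro P
      rw [Subsingleton.elim P 0, norm_zero]
      exact specAux_zero 0
    have himg : g = f := by
      funext t
      rw [hg, hf]
      exact congrArg sSup (Set.image_congr fun P _ => by rw [hzero])
    rw [himg]
    exact hρf
  · have huK : u ∈ K := interior_subset huI
    have h0K : (0 : Fin n → ℝ) ∈ K := by simpa using hscale 0 le_rfl u huK
    have hadd : ∀ a ∈ K, ∀ b ∈ K, a + b ∈ K := by
      intro a ha b hb
      have h2 := hconv ha hb (by norm_num : (0:ℝ) ≤ 1/2) (by norm_num : (0:ℝ) ≤ 1/2)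
        (by norm_num : (1:ℝ)/2 + 1/2 = 1)
      have h3 := hscale 2 (by norm_num) _ h2
      rwa [smul_add, smul_smul, smul_smul, show (2:ℝ) * (1/2) = 1 by norm_num, one_smul,
        one_smul] at h3
    obtain ⟨ε₀, hε₀pos, hball⟩ := Metric.mem_nhds_iff.mp (mem_interior_iff_mem_nhds.mp huI)
    set ε : ℝ := ε₀ / 2 with hε
    have hεpos : 0 < ε := by rw [hε]; positivity
    have hu_up : ∀ z : Fin n → ℝ, ‖z‖ ≤ 1 → u + ε • z ∈ K := by
      intro z hz
      apply hball
      rw [Metric.mem_ball, dist_eq_norm, add_sub_cancel_left, norm_smul, Real.norm_eq_abs,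
        abs_of_pos hεpos]
      calc ε * ‖z‖ ≤ ε * 1 := mul_le_mul_of_nonneg_left hz hεpos.le
        _ < ε₀ := by rw [mul_one, hε]; linarith
    have hune : u ≠ 0 := by
      intro hu0
      have j0 : Fin n := ⟨0, hn⟩
      set z : Fin n → ℝ := Pi.single j0 1 with hzdef
      have hz1 : ‖z‖ = 1 := by rw [hzdef, Pi.norm_single, norm_one]
      have hx : ε • z ∈ K := by
        have := hu_up z (le_of_eq hz1)
        rwa [hu0, zero_add] at this
      have hmx : -(ε • z) ∈ K := by
        have := hu_up (-z) (by rw [norm_neg, hz1])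
        rwa [hu0, zero_add, smul_neg] at this
      have hxne : ε • z ≠ 0 := by
        intro h
        have h2 := congrFun h j0
        rw [hzdef] at h2
        simp [Pi.single_eq_same] at h2
        exact hεpos.ne' h2
      exact hsal _ hx hxne hmx
    obtain ⟨φ, c, F, hc, hF, hφl, hφu⟩ :=
      exists_pos_functional hcl hconv hscale hsal h0K huK hune
    set Bs : Matrix (Fin n) (Fin n) ℝ := (A i₀) ^ s₀ with hBs
    have hpowK : ∀ x ∈ K, Bs *ᵥ x ∈ K := fun x hx =>
      prodsOf_preserve hSK (pow_mem_prodsOf (Set.mem_range_self i₀) s₀) x hx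
    have hBsInt : ∀ x ∈ K, x ≠ 0 → Bs *ᵥ x ∈ interior K := hs₀
    obtain ⟨δ, hδpos, hδ⟩ := exists_delta hcl h0K hscale hune hBsInt
    have hupos : (0:ℝ) < ‖u‖ := norm_pos_iff.mpr hune
    set C₆ : ℝ := ε⁻¹ * (2 * (ε⁻¹ * (‖u‖ + ε) * F / c)) with hC₆
    set γ₀ : ℝ := δ * (δ * ‖u‖ * c / F) with hγ₀
    have hC₆pos : 0 < C₆ := by rw [hC₆]; positivity
    have hγ₀pos : 0 < γ₀ := by rw [hγ₀]; positivity
    set γ : ℝ := γ₀ / C₆ with hγ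
    have hγpos : 0 < γ := by rw [hγ]; positivity
    have key : ∀ (t : ℕ) (P : Matrix (Fin n) (Fin n) ℝ), P ∈ prodsOf (Set.range A) t →
        γ * ‖P‖ ≤ specRad (Bs * P * Bs) := by
      intro t P hP
      have hPK : ∀ x ∈ K, P *ᵥ x ∈ K := prodsOf_preserve hSK hP
      have hMK : ∀ x ∈ K, (Bs * P * Bs) *ᵥ x ∈ K := by
        intro x hx
        rw [← Matrix.mulVec_mulVec, ← Matrix.mulVec_mulVec]
        exact hpowK _ (hPK _ (hpowK _ hx))
      have hL1 : ‖P‖ ≤ C₆ * ‖P *ᵥ u‖ :=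
        norm_le_of_cone h0K hscale huK hεpos hu_up hc hF hφl hφu hPK
      have hL2 : γ₀ * ‖P *ᵥ u‖ ≤ specRad (Bs * P * Bs) :=
        specRad_ge_of_cone h0K hadd hscale huK hune hc hF hφl hφu hδpos hδ hPK hMK
      calc γ * ‖P‖ ≤ γ * (C₆ * ‖P *ᵥ u‖) := mul_le_mul_of_nonneg_left hL1 hγpos.le
        _ = γ₀ * ‖P *ᵥ u‖ := by
            rw [hγ]
            field_simp
        _ ≤ _ := hL2
    have hbddg : ∀ t : ℕ, BddAbove ((fun P => specRad P ^ (t : ℝ)⁻¹) '' prodsOf (Set.range A) t) :=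
      fun t => ((hPfin t).image _).bddAbove
    have hbddf : ∀ t : ℕ, BddAbove ((fun P => ‖P‖ ^ (t : ℝ)⁻¹) '' prodsOf (Set.range A) t) :=
      fun t => ((hPfin t).image _).bddAbove
    have hub : ∀ᶠ t : ℕ in atTop, g t ≤ (n:ℝ) ^ (t : ℝ)⁻¹ * f t := by
      filter_upwards [eventually_ge_atTop 1] with t ht
      rw [hg]
      refine csSup_le ((hPne t).image _) ?_
      rintro x ⟨P, hP, rfl⟩
      have h1 : specRad P ≤ (n:ℝ) * ‖P‖ :=
        specAux_le P ‖P‖ (norm_nonneg P) fun i j => by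
          rw [← Real.norm_eq_abs]
          exact Matrix.norm_entry_le_entrywise_sup_norm P
      calc specRad P ^ (t : ℝ)⁻¹ ≤ ((n:ℝ) * ‖P‖) ^ (t : ℝ)⁻¹ :=
            Real.rpow_le_rpow ENNReal.toReal_nonneg h1 (by positivity)
        _ = (n:ℝ) ^ (t : ℝ)⁻¹ * ‖P‖ ^ (t : ℝ)⁻¹ :=
            Real.mul_rpow (by positivity) (norm_nonneg P)
        _ ≤ (n:ℝ) ^ (t : ℝ)⁻¹ * f t := by
            refine mul_le_mul_of_nonneg_left ?_ (by positivity)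
            rw [hf]
            exact le_csSup (hbddf t) (Set.mem_image_of_mem _ hP)
    have hubT : Tendsto (fun t : ℕ => (n:ℝ) ^ (t : ℝ)⁻¹ * f t) atTop (nhds ρ) := by
      have hn0 : ((n:ℝ)) ≠ 0 := Nat.cast_ne_zero.mpr hn.ne'
      have h1 : Tendsto (fun t : ℕ => ((n:ℝ)) ^ (t : ℝ)⁻¹) atTop (nhds 1) := by
        have := (tendsto_const_nhds (x := (n:ℝ)) (f := atTop)).rpow
          tendsto_inv_atTop_nhds_zero_nat (Or.inl hn0)
        simpa using this
      simpa using h1.mul hρf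
    have hlb : ∀ᶠ T : ℕ in atTop,
        γ ^ (T : ℝ)⁻¹ * (f (T - (s₀ + s₀))) ^ (((T - (s₀ + s₀) : ℕ) : ℝ) * (T : ℝ)⁻¹) ≤ g T := by
      filter_upwards [eventually_ge_atTop (s₀ + s₀ + 1)] with T hT
      set t : ℕ := T - (s₀ + s₀) with ht
      have ht1 : 1 ≤ t := by omega
      have hTt : T = s₀ + t + s₀ := by omega
      have htR : (0:ℝ) < (t:ℝ) := by exact_mod_cast ht1
      have hTR : (0:ℝ) < (T:ℝ) := by
        have : 1 ≤ T := by omega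
        exact_mod_cast this
      have hmem : f t ∈ (fun P => ‖P‖ ^ (t : ℝ)⁻¹) '' prodsOf (Set.range A) t := by
        rw [hf]
        exact ((hPne t).image _).csSup_mem ((hPfin t).image _)
      obtain ⟨Q, hQ, hQeq'⟩ := hmem
      have hQeq : ‖Q‖ ^ (t : ℝ)⁻¹ = f t := hQeq'
      have hM : Bs * Q * Bs ∈ prodsOf (Set.range A) T := by
        rw [hTt, hBs]
        exact prodsOf_mul (prodsOf_mul (pow_mem_prodsOf (Set.mem_range_self i₀) s₀) hQ)
          (pow_mem_prodsOf (Set.mem_range_self i₀) s₀)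
      have hkey := key t Q hQ
      have h2 : specRad (Bs * Q * Bs) ^ (T : ℝ)⁻¹ ≤ g T := by
        rw [hg]
        exact le_csSup (hbddg T) (Set.mem_image_of_mem _ hM)
      have h3 : (γ * ‖Q‖) ^ (T : ℝ)⁻¹ ≤ specRad (Bs * Q * Bs) ^ (T : ℝ)⁻¹ :=
        Real.rpow_le_rpow (by positivity) hkey (by positivity)
      have h4 : (γ * ‖Q‖) ^ (T : ℝ)⁻¹
          = γ ^ (T : ℝ)⁻¹ * (‖Q‖ ^ (t : ℝ)⁻¹) ^ ((t : ℝ) * (T : ℝ)⁻¹) := by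
        rw [Real.mul_rpow hγpos.le (norm_nonneg Q)]
        congr 1
        rw [← Real.rpow_mul (norm_nonneg Q)]
        congr 1
        field_simp
      rw [hQeq] at h4
      calc γ ^ (T : ℝ)⁻¹ * (f t) ^ ((t : ℝ) * (T : ℝ)⁻¹) = (γ * ‖Q‖) ^ (T : ℝ)⁻¹ := h4.symm
        _ ≤ _ := le_trans h3 h2
    have hlbT : Tendsto (fun T : ℕ =>
        γ ^ (T : ℝ)⁻¹ * (f (T - (s₀ + s₀))) ^ (((T - (s₀ + s₀) : ℕ) : ℝ) * (T : ℝ)⁻¹))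
        atTop (nhds ρ) := by
      have h1 : Tendsto (fun T : ℕ => γ ^ (T : ℝ)⁻¹) atTop (nhds 1) := by
        have := (tendsto_const_nhds (x := γ) (f := atTop)).rpow
          tendsto_inv_atTop_nhds_zero_nat (Or.inl hγpos.ne')
        simpa using this
      have h2 : Tendsto (fun T : ℕ => f (T - (s₀ + s₀))) atTop (nhds ρ) :=
        hρf.comp (tendsto_sub_atTop_nat _)
      have h3 : Tendsto (fun T : ℕ => ((T - (s₀ + s₀) : ℕ) : ℝ) * (T : ℝ)⁻¹) atTop (nhds 1) := by
        have h4 : Tendsto (fun T : ℕ => 1 - ((s₀ + s₀ : ℕ) : ℝ) * (T : ℝ)⁻¹) atTop (nhds 1) := by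
          have h5 := tendsto_inv_atTop_nhds_zero_nat.const_mul (((s₀ + s₀ : ℕ) : ℝ))
          simpa using (tendsto_const_nhds (x := (1:ℝ)) (f := atTop)).sub h5
        refine h4.congr' ?_
        filter_upwards [eventually_ge_atTop (s₀ + s₀ + 1)] with T hT
        have hTne : ((T:ℕ):ℝ) ≠ 0 := by
          have : 1 ≤ T := by omega
          exact_mod_cast Nat.one_le_iff_ne_zero.mp this
        rw [Nat.cast_sub (by omega : s₀ + s₀ ≤ T), sub_mul, mul_inv_cancel₀ hTne]
      have h5 := h2.rpow h3 (Or.inr one_pos)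
      have h6 := h1.mul h5
      simpa [Real.rpow_one] using h6
    exact tendsto_of_tendsto_of_tendsto_of_le_of_le' hlbT hubT hlb hub
end SpecAux
end
end
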